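/- Let H = F_2^n and X, Y, D ⊆ H with densities δ_X, δ_Y, δ_D, and suppose ‖X‖_Uni, ‖Y‖_Uni, ‖D‖_Uni ≤ υ. Then | E_{x,y,s∈H} X(x) X(x+s) Y(y) Y(y+s) D(x+y) D(s) − δ_X² δ_Y² δ_D² | ≤ C υ for an absolute constant C (e.g., C = 10). -/

import Mathlib

open Finset

noncomputable section

/-- The group `F_2^n`. -/
abbrev H (n : ℕ) : Type := Fin n → ZMod 2

/-- The character `x ↦ (-1)^{x·ξ}`. -/
def chr {n : ℕ} (x ξ : H n) : ℝ := (-1 : ℝ) ^ ((∑ i, x i * ξ i).val)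

/-- Indicator function of a finite subset of `F_2^n`. -/
def ind {n : ℕ} (X : Finset (H n)) (x : H n) : ℝ := if x ∈ X then 1 else 0

/-- Fourier transform on `F_2^n`. -/
def fhat {n : ℕ} (f : H n → ℝ) (ξ : H n) : ℝ := ∑ x, f x * chr x ξ

/-- Density of `X` in `F_2^n`. -/
def density {n : ℕ} (X : Finset (H n)) : ℝ := (X.card : ℝ) / (Fintype.card (H n) : ℝ)

/-- Average of `f` over `F_2^n`. -/
def havg {n : ℕ} (f : H n → ℝ) : ℝ := (∑ x, f x) / (Fintype.card (H n) : ℝ)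

/-- Uniformity norm: the largest normalized nonzero Fourier coefficient. -/
def uniNorm {n : ℕ} (X : Finset (H n)) : ℝ :=
  ⨆ ξ : {ξ : H n // ξ ≠ 0}, |fhat (ind X) ξ.1| / (Fintype.card (H n) : ℝ)
section AuxLemmas

lemma sign_add (a b : ZMod 2) :
    (-1 : ℝ) ^ ((a + b).val) = (-1 : ℝ) ^ a.val * (-1 : ℝ) ^ b.val := by
  rcases (by decide : ∀ c : ZMod 2, c = 0 ∨ c = 1) a with rfl | rfl <;>
    rcases (by decide : ∀ c : ZMod 2, c = 0 ∨ c = 1) b with rfl | rfl <;>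
    norm_num [show ZMod.val (2 : ZMod 2) = 0 from rfl, show ZMod.val (1 : ZMod 2) = 1 from rfl,
      show ZMod.val (0 : ZMod 2) = 0 from rfl]

lemma zmod2_addself : ∀ a : ZMod 2, a + a = 0 := by decide
lemma zmod2_one : ∀ a : ZMod 2, a ≠ 0 → a = 1 := by decide

variable {n : ℕ}

lemma chr_add_left (x y ξ : H n) : chr (x + y) ξ = chr x ξ * chr y ξ := by
  unfold chr
  rw [show (∑ i, (x + y) i * ξ i) = (∑ i, x i * ξ i) + (∑ i, y i * ξ i) by
    rw [← Finset.sum_add_distrib]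
    exact Finset.sum_congr rfl fun i _ => by simp [add_mul]]
  exact sign_add _ _

lemma chr_comm (x ξ : H n) : chr x ξ = chr ξ x := by
  unfold chr
  rw [show (∑ i, x i * ξ i) = ∑ i, ξ i * x i from Finset.sum_congr rfl fun i _ => mul_comm _ _]

lemma chr_zero_right (x : H n) : chr x 0 = 1 := by simp [chr]

lemma addself (x : H n) : x + x = 0 := by
  funext i; exact zmod2_addself (x i)

lemma add_eq_zero_iff2 (a b : H n) : a + b = 0 ↔ a = b := by
  constructor
  · intro h
    have h2 : a + b + b = b := by rw [h, zero_add]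
    rwa [add_assoc, addself, add_zero] at h2
  · rintro rfl; exact addself a

lemma sum_chr (ξ : H n) :
    ∑ x, chr x ξ = if ξ = 0 then (Fintype.card (H n) : ℝ) else 0 := by
  by_cases hξ : ξ = 0
  · subst hξ
    simp [chr_zero_right, Finset.card_univ]
  · rw [if_neg hξ]
    obtain ⟨i, hi⟩ : ∃ i, ξ i ≠ 0 := by
      by_contra hc; push_neg at hc; exact hξ (funext hc)
    set e : H n := Pi.single i 1 with he_def
    have he : chr e ξ = -1 := by
      unfold chr
      have hd : (∑ j, e j * ξ j) = ξ i := by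
        rw [Finset.sum_eq_single i]
        · simp [he_def]
        · intro j _ hj; simp [he_def, Pi.single_apply, hj]
        · intro hmem; exact absurd (Finset.mem_univ i) hmem
      rw [hd, zmod2_one _ hi]
      norm_num [show ZMod.val (1 : ZMod 2) = 1 from rfl]
    have hsum : ∑ x, chr (x + e) ξ = ∑ x, chr x ξ :=
      Fintype.sum_equiv (Equiv.addRight e) _ _ (fun x => rfl)
    have h2 : ∑ x, chr (x + e) ξ = (∑ x, chr x ξ) * (-1) := by
      rw [Finset.sum_mul]
      exact Finset.sum_congr rfl fun x _ => by rw [chr_add_left, he]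
    have := hsum.symm.trans h2
    linarith [this]

lemma sum_chr_right (z : H n) :
    ∑ ξ, chr z ξ = if z = 0 then (Fintype.card (H n) : ℝ) else 0 := by
  rw [show (∑ ξ, chr z ξ) = ∑ ξ, chr ξ z from Finset.sum_congr rfl fun ξ _ => chr_comm z ξ]
  exact sum_chr z

lemma plancherel (f g : H n → ℝ) :
    ∑ ξ, fhat f ξ * fhat g ξ = (Fintype.card (H n) : ℝ) * ∑ x, f x * g x := by
  unfold fhat
  have key : ∀ ξ, (∑ x, f x * chr x ξ) * (∑ y, g y * chr y ξ)
      = ∑ x, ∑ y, f x * g y * chr (x + y) ξ := by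
    intro ξ
    rw [Finset.sum_mul_sum]
    exact Finset.sum_congr rfl fun x _ => Finset.sum_congr rfl fun y _ => by
      rw [chr_add_left]; ring
  simp_rw [key]
  rw [Finset.sum_comm]
  have : ∀ x, ∑ ξ, ∑ y, f x * g y * chr (x + y) ξ
      = (Fintype.card (H n) : ℝ) * (f x * g x) := by
    intro x
    rw [Finset.sum_comm]
    have : ∀ y, ∑ ξ, f x * g y * chr (x + y) ξ
        = f x * g y * (if x + y = 0 then (Fintype.card (H n) : ℝ) else 0) := by
      intro y
      rw [← Finset.mul_sum, sum_chr_right]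
    simp_rw [this, add_eq_zero_iff2]
    rw [Finset.sum_eq_single x]
    · simp [mul_comm]
    · intro y _ hy; simp [Ne.symm hy]
    · intro hmem; exact absurd (Finset.mem_univ x) hmem
  simp_rw [this, ← Finset.mul_sum]

lemma fhat_conv (G b : H n → ℝ) (ξ : H n) :
    fhat (fun x => ∑ y, G y * b (x + y)) ξ = fhat G ξ * fhat b ξ := by
  unfold fhat
  rw [show (∑ x, (∑ y, G y * b (x + y)) * chr x ξ)
      = ∑ y, ∑ x, G y * b (x + y) * chr x ξ by
    rw [Finset.sum_comm]
    exact Finset.sum_congr rfl fun x _ => by rw [Finset.sum_mul]]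
  have key : ∀ y, ∑ x, G y * b (x + y) * chr x ξ
      = G y * chr y ξ * ∑ t, b t * chr t ξ := by
    intro y
    have reidx : ∑ t, G y * b (y + t + y) * chr (y + t) ξ
        = ∑ x, G y * b (x + y) * chr x ξ :=
      Fintype.sum_bijective (fun t => y + t) (Equiv.addLeft y).bijective _ _ (fun t => rfl)
    rw [← reidx, Finset.mul_sum]
    refine Finset.sum_congr rfl fun t _ => ?_
    rw [show y + t + y = t by rw [add_comm y t, add_assoc, addself, add_zero],
      chr_add_left]
    ring
  simp_rw [key]
  rw [← Finset.sum_mul]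

lemma fhat_corr (f : H n → ℝ) (ξ : H n) :
    fhat (fun s => ∑ x, f x * f (x + s)) ξ = (fhat f ξ) ^ 2 := by
  have : (fun s => ∑ x, f x * f (x + s)) = (fun s => ∑ x, f x * f (s + x)) := by
    funext s; exact Finset.sum_congr rfl fun x _ => by rw [add_comm]
  rw [this, fhat_conv, sq]

lemma trilinear (F G b : H n → ℝ) :
    (Fintype.card (H n) : ℝ) * (∑ x, ∑ y, F x * G y * b (x + y))
      = ∑ ξ, fhat b ξ * (fhat F ξ * fhat G ξ) := by
  have h1 : ∀ x, ∑ y, F x * G y * b (x + y) = F x * ∑ y, G y * b (x + y) := by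
    intro x
    rw [Finset.mul_sum]
    exact Finset.sum_congr rfl fun y _ => by ring
  simp_rw [h1]
  rw [← plancherel F (fun x => ∑ y, G y * b (x + y))]
  refine Finset.sum_congr rfl fun ξ _ => ?_
  rw [fhat_conv]
  ring

lemma fhat_const (c : ℝ) (ξ : H n) :
    fhat (fun _ : H n => c) ξ = c * (if ξ = 0 then (Fintype.card (H n) : ℝ) else 0) := by
  unfold fhat
  rw [← Finset.mul_sum]
  congr 1
  rw [show (∑ x : H n, chr x ξ) = ∑ x : H n, chr ξ x from
    Finset.sum_congr rfl fun x _ => chr_comm x ξ]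
  exact sum_chr_right ξ

lemma fhat_sub (f g : H n → ℝ) (ξ : H n) :
    fhat (fun x => f x - g x) ξ = fhat f ξ - fhat g ξ := by
  unfold fhat
  rw [← Finset.sum_sub_distrib]
  exact Finset.sum_congr rfl fun x _ => by ring

lemma ind_nonneg (X : Finset (H n)) (x : H n) : 0 ≤ ind X x := by
  unfold ind; split <;> norm_num

lemma ind_le_one (X : Finset (H n)) (x : H n) : ind X x ≤ 1 := by
  unfold ind; split <;> norm_num

lemma sum_ind (X : Finset (H n)) : ∑ x, ind X x = (X.card : ℝ) := by
  unfold ind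
  rw [Finset.sum_ite_mem, Finset.univ_inter, Finset.sum_const, nsmul_eq_mul, mul_one]

lemma fhat_ind_zero (X : Finset (H n)) : fhat (ind X) 0 = (X.card : ℝ) := by
  unfold fhat
  simp_rw [chr_zero_right, mul_one]
  exact sum_ind X

lemma uniNorm_nonneg (X : Finset (H n)) : 0 ≤ uniNorm X :=
  Real.iSup_nonneg fun ξ => by positivity

lemma fhat_le_uniNorm (X : Finset (H n)) {ξ : H n} (hξ : ξ ≠ 0) :
    |fhat (ind X) ξ| ≤ uniNorm X * (Fintype.card (H n) : ℝ) := by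
  have hN : (0 : ℝ) < (Fintype.card (H n) : ℝ) := by
    exact_mod_cast Fintype.card_pos
  set F : {ξ : H n // ξ ≠ 0} → ℝ :=
    fun ζ => |fhat (ind X) ζ.1| / (Fintype.card (H n) : ℝ) with hF
  have h1 : F ⟨ξ, hξ⟩ ≤ ⨆ ζ, F ζ :=
    le_ciSup (Set.Finite.bddAbove (Set.finite_range F)) _
  have h2 : F ⟨ξ, hξ⟩ = |fhat (ind X) ξ| / (Fintype.card (H n) : ℝ) := rfl
  have h3 : uniNorm X = ⨆ ζ, F ζ := rfl
  rw [h2] at h1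
  rw [h3]
  calc |fhat (ind X) ξ|
      = |fhat (ind X) ξ| / (Fintype.card (H n) : ℝ) * (Fintype.card (H n) : ℝ) := by
        field_simp
    _ ≤ (⨆ ζ, F ζ) * (Fintype.card (H n) : ℝ) := mul_le_mul_of_nonneg_right h1 hN.le

lemma cardH_pos : (0 : ℝ) < (Fintype.card (H n) : ℝ) := by exact_mod_cast Fintype.card_pos

lemma sum_fhat_sq_le (f : H n → ℝ) (h0 : ∀ x, 0 ≤ f x) (h1 : ∀ x, f x ≤ 1) :
    ∑ ξ, (fhat f ξ) ^ 2 ≤ (Fintype.card (H n) : ℝ) ^ 2 := by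
  have hp := plancherel f f
  have he : ∑ ξ, (fhat f ξ) ^ 2 = (Fintype.card (H n) : ℝ) * ∑ x, f x * f x := by
    simpa [sq] using hp
  rw [he]
  have hb : ∑ x, f x * f x ≤ ∑ _x : H n, (1 : ℝ) :=
    Finset.sum_le_sum fun x _ => by nlinarith [h0 x, h1 x]
  have hc : ∑ _x : H n, (1 : ℝ) = (Fintype.card (H n) : ℝ) := by
    rw [Finset.sum_const, Finset.card_univ, nsmul_eq_mul, mul_one]
  nlinarith [cardH_pos (n := n)]

lemma abs_mul_le_half (a b : ℝ) : |a * b| ≤ (a ^ 2 + b ^ 2) / 2 := by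
  rw [abs_mul]
  nlinarith [sq_nonneg (|a| - |b|), sq_abs a, sq_abs b, abs_nonneg a, abs_nonneg b]

/-- fhat of the balanced indicator is small everywhere. -/
lemma fhat_balanced_le (D : Finset (H n)) {υ : ℝ} (hD : uniNorm D ≤ υ) (ξ : H n) :
    |fhat (fun z => ind D z - density D) ξ| ≤ υ * (Fintype.card (H n) : ℝ) := by
  have hN : (0 : ℝ) < (Fintype.card (H n) : ℝ) := cardH_pos
  have hυ0 : 0 ≤ υ := le_trans (uniNorm_nonneg D) hD
  have hfe : fhat (fun z => ind D z - density D) ξ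
      = fhat (ind D) ξ - density D * (if ξ = 0 then (Fintype.card (H n) : ℝ) else 0) := by
    rw [show (fun z => ind D z - density D) = (fun z => ind D z - (fun _ : H n => density D) z)
      from rfl, fhat_sub, fhat_const]
  rw [hfe]
  by_cases hξ : ξ = 0
  · subst hξ
    rw [if_pos rfl, fhat_ind_zero]
    have hz : (D.card : ℝ) - density D * (Fintype.card (H n) : ℝ) = 0 := by
      unfold density; field_simp; ring
    rw [hz, abs_zero]
    positivity
  · rw [if_neg hξ, mul_zero, sub_zero]
    calc |fhat (ind D) ξ| ≤ uniNorm D * (Fintype.card (H n) : ℝ) := fhat_le_uniNorm D hξ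
      _ ≤ υ * (Fintype.card (H n) : ℝ) := mul_le_mul_of_nonneg_right hD hN.le

/-- B1: the per-`s` trilinear error bound. -/
lemma Bs_bound (X Y D : Finset (H n)) {υ : ℝ} (hD : uniNorm D ≤ υ) (s : H n) :
    |∑ x, ∑ y, (ind X x * ind X (x + s)) * (ind Y y * ind Y (y + s)) *
        (ind D (x + y) - density D)|
      ≤ υ * (Fintype.card (H n) : ℝ) ^ 2 := by
  have hN : (0 : ℝ) < (Fintype.card (H n) : ℝ) := cardH_pos
  have hυ0 : 0 ≤ υ := le_trans (uniNorm_nonneg D) hD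
  set N := (Fintype.card (H n) : ℝ) with hNdef
  set F : H n → ℝ := fun x => ind X x * ind X (x + s) with hF
  set G : H n → ℝ := fun y => ind Y y * ind Y (y + s) with hG
  set b : H n → ℝ := fun z => ind D z - density D with hb
  have htri := trilinear F G b
  have hFsq : ∑ ξ, (fhat F ξ) ^ 2 ≤ N ^ 2 :=
    sum_fhat_sq_le F (fun x => mul_nonneg (ind_nonneg _ _) (ind_nonneg _ _))
      (fun x => by
        calc ind X x * ind X (x + s) ≤ 1 * 1 :=
          mul_le_mul (ind_le_one _ _) (ind_le_one _ _) (ind_nonneg _ _) zero_le_one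
          _ = 1 := by ring)
  have hGsq : ∑ ξ, (fhat G ξ) ^ 2 ≤ N ^ 2 :=
    sum_fhat_sq_le G (fun y => mul_nonneg (ind_nonneg _ _) (ind_nonneg _ _))
      (fun y => by
        calc ind Y y * ind Y (y + s) ≤ 1 * 1 :=
          mul_le_mul (ind_le_one _ _) (ind_le_one _ _) (ind_nonneg _ _) zero_le_one
          _ = 1 := by ring)
  have hmain : |∑ ξ, fhat b ξ * (fhat F ξ * fhat G ξ)| ≤ υ * N ^ 3 := by
    calc |∑ ξ, fhat b ξ * (fhat F ξ * fhat G ξ)|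
        ≤ ∑ ξ, |fhat b ξ * (fhat F ξ * fhat G ξ)| := Finset.abs_sum_le_sum_abs _ _
      _ ≤ ∑ ξ, (υ * N) * (((fhat F ξ) ^ 2 + (fhat G ξ) ^ 2) / 2) := by
          refine Finset.sum_le_sum fun ξ _ => ?_
          rw [abs_mul]
          exact mul_le_mul (fhat_balanced_le D hD ξ) (abs_mul_le_half _ _)
            (abs_nonneg _) (by positivity)
      _ = (υ * N) * ((∑ ξ, (fhat F ξ) ^ 2) + ∑ ξ, (fhat G ξ) ^ 2) / 2 := by
          rw [← Finset.mul_sum, ← Finset.sum_div, Finset.sum_add_distrib]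
          ring
      _ ≤ (υ * N) * (N ^ 2 + N ^ 2) / 2 := by
          have h1 : (∑ ξ, (fhat F ξ) ^ 2) + ∑ ξ, (fhat G ξ) ^ 2 ≤ N ^ 2 + N ^ 2 :=
            add_le_add hFsq hGsq
          have h2 : 0 ≤ υ * N := by positivity
          nlinarith [h2, h1]
      _ = υ * N ^ 3 := by ring
  rw [← htri] at hmain
  rw [abs_mul, abs_of_pos hN] at hmain
  have := (mul_le_mul_iff_right₀ hN).mp (by calc
    N * |∑ x, ∑ y, F x * G y * b (x + y)| ≤ υ * N ^ 3 := hmain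
    _ = N * (υ * N ^ 2) := by ring)
  exact this

/-- B2: cross-term bound. -/
lemma cross_bound (A D : Finset (H n)) {υ : ℝ} (hA : uniNorm A ≤ υ) (hD : uniNorm D ≤ υ) :
    |∑ s, ind D s * ((∑ x, ind A x * ind A (x + s))
        - density A ^ 2 * (Fintype.card (H n) : ℝ))|
      ≤ υ * (Fintype.card (H n) : ℝ) ^ 2 := by
  have hN : (0 : ℝ) < (Fintype.card (H n) : ℝ) := cardH_pos
  have hυ0 : 0 ≤ υ := le_trans (uniNorm_nonneg D) hD
  set N := (Fintype.card (H n) : ℝ) with hNdef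
  set u : H n → ℝ := fun s => (∑ x, ind A x * ind A (x + s)) - density A ^ 2 * N with hu
  have hpl := plancherel (ind D) u
  have hufhat : ∀ ξ, fhat u ξ = (fhat (ind A) ξ) ^ 2
      - density A ^ 2 * N * (if ξ = 0 then N else 0) := by
    intro ξ
    rw [show u = (fun s => (fun s' => ∑ x, ind A x * ind A (x + s')) s
      - (fun _ : H n => density A ^ 2 * N) s) from rfl, fhat_sub, fhat_corr, fhat_const]
  have hpoint : ∀ ξ, |fhat (ind D) ξ * fhat u ξ| ≤ (υ * N) * (fhat (ind A) ξ) ^ 2 := by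
    intro ξ
    by_cases hξ : ξ = 0
    · subst hξ
      have h0 : fhat u 0 = 0 := by
        have hkey : density A * N = (A.card : ℝ) := by
          unfold density
          exact div_mul_cancel₀ _ (ne_of_gt hN)
        have hkey2 : density A ^ 2 * N * N = (A.card : ℝ) ^ 2 := by
          calc density A ^ 2 * N * N = (density A * N) ^ 2 := by ring
            _ = (A.card : ℝ) ^ 2 := by rw [hkey]
        rw [hufhat 0, if_pos rfl, fhat_ind_zero]
        rw [sq (A.card : ℝ)] at hkey2
        nlinarith [hkey2]
      rw [h0, mul_zero, abs_zero]
      positivity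
    · have h1 : fhat u ξ = (fhat (ind A) ξ) ^ 2 := by
        rw [hufhat ξ, if_neg hξ, mul_zero, sub_zero]
      rw [h1, abs_mul, abs_of_nonneg (sq_nonneg (fhat (ind A) ξ))]
      exact mul_le_mul_of_nonneg_right
        (le_trans (fhat_le_uniNorm D hξ) (mul_le_mul_of_nonneg_right hD hN.le))
        (sq_nonneg _)
  have hAsq : ∑ ξ, (fhat (ind A) ξ) ^ 2 ≤ N ^ 2 :=
    sum_fhat_sq_le _ (ind_nonneg A) (ind_le_one A)
  have hmain : |∑ ξ, fhat (ind D) ξ * fhat u ξ| ≤ υ * N ^ 3 := by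
    calc |∑ ξ, fhat (ind D) ξ * fhat u ξ| ≤ ∑ ξ, |fhat (ind D) ξ * fhat u ξ| :=
        Finset.abs_sum_le_sum_abs _ _
      _ ≤ ∑ ξ, (υ * N) * (fhat (ind A) ξ) ^ 2 := Finset.sum_le_sum fun ξ _ => hpoint ξ
      _ = (υ * N) * ∑ ξ, (fhat (ind A) ξ) ^ 2 := by rw [← Finset.mul_sum]
      _ ≤ (υ * N) * N ^ 2 := by
          have : 0 ≤ υ * N := by positivity
          nlinarith [hAsq]
      _ = υ * N ^ 3 := by ring
  rw [hpl] at hmain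
  rw [abs_mul, abs_of_pos hN] at hmain
  exact (mul_le_mul_iff_right₀ hN).mp (by calc
    N * |∑ s, ind D s * u s| ≤ υ * N ^ 3 := hmain
    _ = N * (υ * N ^ 2) := by ring)

/-- B4: L² bound on the balanced autocorrelation. -/
lemma usq_bound (A : Finset (H n)) {υ : ℝ} (hA : uniNorm A ≤ υ) :
    ∑ s, ((∑ x, ind A x * ind A (x + s))
        - density A ^ 2 * (Fintype.card (H n) : ℝ)) ^ 2
      ≤ υ ^ 2 * (Fintype.card (H n) : ℝ) ^ 3 := by
  have hN : (0 : ℝ) < (Fintype.card (H n) : ℝ) := cardH_pos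
  have hυ0 : 0 ≤ υ := le_trans (uniNorm_nonneg A) hA
  set N := (Fintype.card (H n) : ℝ) with hNdef
  set u : H n → ℝ := fun s => (∑ x, ind A x * ind A (x + s)) - density A ^ 2 * N with hu
  have hpl := plancherel u u
  have hufhat : ∀ ξ, fhat u ξ = (fhat (ind A) ξ) ^ 2
      - density A ^ 2 * N * (if ξ = 0 then N else 0) := by
    intro ξ
    rw [show u = (fun s => (fun s' => ∑ x, ind A x * ind A (x + s')) s
      - (fun _ : H n => density A ^ 2 * N) s) from rfl, fhat_sub, fhat_corr, fhat_const]
  have hpoint : ∀ ξ, fhat u ξ * fhat u ξ ≤ (υ * N) ^ 2 * (fhat (ind A) ξ) ^ 2 := by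
    intro ξ
    by_cases hξ : ξ = 0
    · subst hξ
      have h0 : fhat u 0 = 0 := by
        have hkey : density A * N = (A.card : ℝ) := by
          unfold density
          exact div_mul_cancel₀ _ (ne_of_gt hN)
        have hkey2 : density A ^ 2 * N * N = (A.card : ℝ) ^ 2 := by
          calc density A ^ 2 * N * N = (density A * N) ^ 2 := by ring
            _ = (A.card : ℝ) ^ 2 := by rw [hkey]
        rw [hufhat 0, if_pos rfl, fhat_ind_zero]
        rw [sq (A.card : ℝ)] at hkey2
        nlinarith [hkey2]
      rw [h0, mul_zero]
      positivity
    · have h1 : fhat u ξ = (fhat (ind A) ξ) ^ 2 := by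
        rw [hufhat ξ, if_neg hξ, mul_zero, sub_zero]
      rw [h1]
      have h2 : |fhat (ind A) ξ| ≤ υ * N :=
        le_trans (fhat_le_uniNorm A hξ) (mul_le_mul_of_nonneg_right hA hN.le)
      have h3 : (fhat (ind A) ξ) ^ 2 ≤ (υ * N) ^ 2 := by
        nlinarith [sq_abs (fhat (ind A) ξ), abs_nonneg (fhat (ind A) ξ)]
      nlinarith [sq_nonneg (fhat (ind A) ξ)]
  have hAsq : ∑ ξ, (fhat (ind A) ξ) ^ 2 ≤ N ^ 2 :=
    sum_fhat_sq_le _ (ind_nonneg A) (ind_le_one A)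
  have hmain : ∑ ξ, fhat u ξ * fhat u ξ ≤ υ ^ 2 * N ^ 4 := by
    calc ∑ ξ, fhat u ξ * fhat u ξ ≤ ∑ ξ, (υ * N) ^ 2 * (fhat (ind A) ξ) ^ 2 :=
        Finset.sum_le_sum fun ξ _ => hpoint ξ
      _ = (υ * N) ^ 2 * ∑ ξ, (fhat (ind A) ξ) ^ 2 := by rw [← Finset.mul_sum]
      _ ≤ (υ * N) ^ 2 * N ^ 2 := by nlinarith [hAsq, sq_nonneg (υ * N)]
      _ = υ ^ 2 * N ^ 4 := by ring
  rw [hpl] at hmain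
  have h5 : ∑ s, u s * u s ≤ υ ^ 2 * N ^ 3 :=
    (mul_le_mul_iff_right₀ hN).mp (by calc
      N * ∑ s, u s * u s ≤ υ ^ 2 * N ^ 4 := hmain
      _ = N * (υ ^ 2 * N ^ 3) := by ring)
  calc ∑ s, u s ^ 2 = ∑ s, u s * u s := by
        exact Finset.sum_congr rfl fun s _ => sq (u s) ▸ by ring
    _ ≤ υ ^ 2 * N ^ 3 := h5

end AuxLemmas

set_option maxHeartbeats 2000000 in
/-- The normalized count of corners of the lattice `S = X×Y ∩ X×_diag D` is
`δ_X² δ_Y² δ_D²` up to `C·υ` for an absolute constant `C`, provided `X`, `Y`, `D`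
are `υ`-uniform. -/
theorem stmt_9 :
    ∃ C : ℝ, 0 < C ∧ ∀ (n : ℕ) (X Y D : Finset (H n)) (υ : ℝ),
      uniNorm X ≤ υ → uniNorm Y ≤ υ → uniNorm D ≤ υ →
      |(∑ x, ∑ y, ∑ s, ind X x * ind X (x + s) * ind Y y * ind Y (y + s) *
            ind D (x + y) * ind D s) / (Fintype.card (H n) : ℝ) ^ 3
          - density X ^ 2 * density Y ^ 2 * density D ^ 2| ≤ C * υ := by
  refine ⟨10, by norm_num, ?_⟩
  intro n X Y D υ hX hY hD
  have hN : (0 : ℝ) < (Fintype.card (H n) : ℝ) := cardH_pos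
  have hNne : (Fintype.card (H n) : ℝ) ≠ 0 := ne_of_gt hN
  have hdens : ∀ A : Finset (H n), 0 ≤ density A ∧ density A ≤ 1 := by
    intro A
    constructor
    · unfold density; positivity
    · unfold density
      rw [div_le_one hN]
      exact_mod_cast Finset.card_le_univ A
  set N := (Fintype.card (H n) : ℝ) with hNdef
  have hυ0 : 0 ≤ υ := le_trans (uniNorm_nonneg D) hD
  obtain ⟨hδX0, hδX1⟩ := hdens X
  obtain ⟨hδY0, hδY1⟩ := hdens Y
  obtain ⟨hδD0, hδD1⟩ := hdens D
  set P : H n → ℝ := fun s => ∑ x, ind X x * ind X (x + s) with hP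
  set Q : H n → ℝ := fun s => ∑ y, ind Y y * ind Y (y + s) with hQ
  set u : H n → ℝ := fun s => P s - density X ^ 2 * N with hu
  set v : H n → ℝ := fun s => Q s - density Y ^ 2 * N with hv
  set Bf : H n → ℝ := fun s => ∑ x, ∑ y, (ind X x * ind X (x + s)) * (ind Y y * ind Y (y + s)) *
      (ind D (x + y) - density D) with hBf
  set S : ℝ := ∑ x, ∑ y, ∑ s, ind X x * ind X (x + s) * ind Y y * ind Y (y + s) *
      ind D (x + y) * ind D s with hS
  -- pull-out helper
  have pull : ∀ (k : ℝ) (W : H n → H n → ℝ),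
      (∑ x, ∑ y, k * W x y) = k * ∑ x, ∑ y, W x y := by
    intro k W
    rw [Finset.mul_sum]
    exact Finset.sum_congr rfl fun x _ => (Finset.mul_sum _ _ _).symm
  -- swap sums
  have swap : S = ∑ s, ∑ x, ∑ y, ind X x * ind X (x + s) * ind Y y * ind Y (y + s) *
      ind D (x + y) * ind D s := by
    rw [hS]
    have e1 : ∀ x : H n, (∑ y, ∑ s, ind X x * ind X (x + s) * ind Y y * ind Y (y + s) *
        ind D (x + y) * ind D s)
        = ∑ s, ∑ y, ind X x * ind X (x + s) * ind Y y * ind Y (y + s) *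
        ind D (x + y) * ind D s := fun x => Finset.sum_comm
    simp_rw [e1]
    exact Finset.sum_comm
  -- per-s splitting of the h(x+y) factor
  have split1 : ∀ s : H n,
      (∑ x, ∑ y, ind X x * ind X (x + s) * ind Y y * ind Y (y + s) * ind D (x + y) * ind D s)
      = density D * (ind D s * (P s * Q s)) + ind D s * Bf s := by
    intro s
    have hPQ : P s * Q s = ∑ x, ∑ y, (ind X x * ind X (x + s)) * (ind Y y * ind Y (y + s)) :=
      Finset.sum_mul_sum _ _ _ _
    calc (∑ x, ∑ y, ind X x * ind X (x + s) * ind Y y * ind Y (y + s) * ind D (x + y) * ind D s)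
        = ∑ x, ∑ y, (density D * (ind D s * ((ind X x * ind X (x + s)) * (ind Y y * ind Y (y + s))))
            + ind D s * ((ind X x * ind X (x + s)) * (ind Y y * ind Y (y + s)) *
              (ind D (x + y) - density D))) :=
          Finset.sum_congr rfl fun x _ => Finset.sum_congr rfl fun y _ => by ring
      _ = (∑ x, ∑ y, density D * (ind D s * ((ind X x * ind X (x + s)) * (ind Y y * ind Y (y + s)))))
            + ∑ x, ∑ y, ind D s * ((ind X x * ind X (x + s)) * (ind Y y * ind Y (y + s)) *
              (ind D (x + y) - density D)) := by
          simp only [Finset.sum_add_distrib]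
      _ = density D * (ind D s * (P s * Q s)) + ind D s * Bf s := by
          rw [pull (density D), pull (ind D s), pull (ind D s), hPQ, hBf]
  -- decompose P, Q into mean plus balanced parts
  have split2 : ∀ s : H n, ind D s * (P s * Q s)
      = density X ^ 2 * N * (density Y ^ 2 * N * ind D s)
        + density X ^ 2 * N * (ind D s * v s)
        + density Y ^ 2 * N * (ind D s * u s)
        + ind D s * (u s * v s) := by
    intro s
    have h1 : P s = density X ^ 2 * N + u s := by rw [hu]; ring
    have h2 : Q s = density Y ^ 2 * N + v s := by rw [hv]; ring
    rw [h1, h2]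
    ring
  have hsumd : ∑ s, ind D s = density D * N := by
    rw [sum_ind, hNdef]
    unfold density
    rw [div_mul_cancel₀ _ hNne]
  have e3 : ∑ s, ind D s * (P s * Q s)
      = density X ^ 2 * N * (density Y ^ 2 * N * (density D * N))
        + density X ^ 2 * N * (∑ s, ind D s * v s)
        + density Y ^ 2 * N * (∑ s, ind D s * u s)
        + ∑ s, ind D s * (u s * v s) := by
    calc ∑ s, ind D s * (P s * Q s)
        = ∑ s, (density X ^ 2 * N * (density Y ^ 2 * N * ind D s)
            + density X ^ 2 * N * (ind D s * v s)
            + density Y ^ 2 * N * (ind D s * u s)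
            + ind D s * (u s * v s)) := Finset.sum_congr rfl fun s _ => split2 s
      _ = (∑ s, density X ^ 2 * N * (density Y ^ 2 * N * ind D s))
            + (∑ s, density X ^ 2 * N * (ind D s * v s))
            + (∑ s, density Y ^ 2 * N * (ind D s * u s))
            + ∑ s, ind D s * (u s * v s) := by
          simp only [Finset.sum_add_distrib]
      _ = density X ^ 2 * N * (density Y ^ 2 * N * (density D * N))
            + density X ^ 2 * N * (∑ s, ind D s * v s)
            + density Y ^ 2 * N * (∑ s, ind D s * u s)
            + ∑ s, ind D s * (u s * v s) := by
          rw [← Finset.mul_sum, ← Finset.mul_sum, ← Finset.mul_sum, ← Finset.mul_sum, hsumd]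
  have e2 : S = density D * (∑ s, ind D s * (P s * Q s)) + ∑ s, ind D s * Bf s := by
    rw [swap]
    calc (∑ s, ∑ x, ∑ y, ind X x * ind X (x + s) * ind Y y * ind Y (y + s) *
          ind D (x + y) * ind D s)
        = ∑ s, (density D * (ind D s * (P s * Q s)) + ind D s * Bf s) :=
          Finset.sum_congr rfl fun s _ => split1 s
      _ = (∑ s, density D * (ind D s * (P s * Q s))) + ∑ s, ind D s * Bf s :=
          Finset.sum_add_distrib
      _ = density D * (∑ s, ind D s * (P s * Q s)) + ∑ s, ind D s * Bf s := by
          rw [← Finset.mul_sum]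
  have e4 : S = density D ^ 2 * density X ^ 2 * density Y ^ 2 * N ^ 3
      + density D * (density X ^ 2 * N * (∑ s, ind D s * v s)
        + density Y ^ 2 * N * (∑ s, ind D s * u s)
        + ∑ s, ind D s * (u s * v s))
      + ∑ s, ind D s * Bf s := by
    rw [e2, e3]; ring
  -- bounds
  have hdv : |∑ s, ind D s * v s| ≤ υ * N ^ 2 := cross_bound Y D hY hD
  have hdu : |∑ s, ind D s * u s| ≤ υ * N ^ 2 := cross_bound X D hX hD
  have husq : ∑ s, u s ^ 2 ≤ υ ^ 2 * N ^ 3 := usq_bound X hX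
  have hvsq : ∑ s, v s ^ 2 ≤ υ ^ 2 * N ^ 3 := usq_bound Y hY
  have hduv : |∑ s, ind D s * (u s * v s)| ≤ υ ^ 2 * N ^ 3 := by
    have step1 : |∑ s, ind D s * (u s * v s)| ≤ ∑ s, |ind D s * (u s * v s)| :=
      Finset.abs_sum_le_sum_abs _ _
    have step3 : ∑ s, |ind D s * (u s * v s)| ≤ ∑ s, (u s ^ 2 + v s ^ 2) / 2 := by
      refine Finset.sum_le_sum fun s _ => ?_
      have h1 : |ind D s| ≤ 1 := by
        rw [abs_of_nonneg (ind_nonneg D s)]; exact ind_le_one D s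
      have h2 := abs_mul_le_half (u s) (v s)
      have h3 : |ind D s * (u s * v s)| = |ind D s| * |u s * v s| := abs_mul _ _
      nlinarith [abs_nonneg (u s * v s), abs_nonneg (ind D s)]
    have step4 : ∑ s, (u s ^ 2 + v s ^ 2) / 2 = ((∑ s, u s ^ 2) + ∑ s, v s ^ 2) / 2 := by
      rw [← Finset.sum_div, Finset.sum_add_distrib]
    linarith
  have hdB : |∑ s, ind D s * Bf s| ≤ υ * N ^ 3 := by
    have step1 : |∑ s, ind D s * Bf s| ≤ ∑ s, |ind D s * Bf s| :=
      Finset.abs_sum_le_sum_abs _ _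
    have step2 : ∑ s, |ind D s * Bf s| ≤ ∑ _s : H n, υ * N ^ 2 := by
      refine Finset.sum_le_sum fun s _ => ?_
      have h1 : |ind D s| ≤ 1 := by
        rw [abs_of_nonneg (ind_nonneg D s)]; exact ind_le_one D s
      have h2 : |Bf s| ≤ υ * N ^ 2 := Bs_bound X Y D hD s
      have h3 : |ind D s * Bf s| = |ind D s| * |Bf s| := abs_mul _ _
      have h4 : |ind D s| * |Bf s| ≤ 1 * (υ * N ^ 2) :=
        mul_le_mul h1 h2 (abs_nonneg _) zero_le_one
      rw [h3]
      linarith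
    have step3 : (∑ _s : H n, υ * N ^ 2) = N * (υ * N ^ 2) := by
      rw [Finset.sum_const, Finset.card_univ, nsmul_eq_mul, ← hNdef]
    have step4 : N * (υ * N ^ 2) = υ * N ^ 3 := by ring
    linarith
  -- the main difference identity
  have e5 : S / N ^ 3 - density X ^ 2 * density Y ^ 2 * density D ^ 2
      = (density D * (density X ^ 2 * N * (∑ s, ind D s * v s)
          + density Y ^ 2 * N * (∑ s, ind D s * u s)
          + ∑ s, ind D s * (u s * v s))
        + ∑ s, ind D s * Bf s) / N ^ 3 := by
    rw [e4]
    field_simp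
    ring
  rw [e5]
  -- final numeric bound
  have hsq1 : density X ^ 2 ≤ 1 := pow_le_one₀ hδX0 hδX1
  have hsq2 : density Y ^ 2 ≤ 1 := pow_le_one₀ hδY0 hδY1
  have t1 : |density X ^ 2 * N * (∑ s, ind D s * v s)| ≤ υ * N ^ 3 := by
    rw [abs_mul, abs_of_nonneg (by positivity : (0:ℝ) ≤ density X ^ 2 * N)]
    have h0 : density X ^ 2 * N * |∑ s, ind D s * v s| ≤ 1 * N * (υ * N ^ 2) := by
      apply mul_le_mul _ hdv (abs_nonneg _) (by positivity)
      calc density X ^ 2 * N ≤ 1 * N := mul_le_mul_of_nonneg_right hsq1 hN.le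
        _ = 1 * N := rfl
    have h1 : (1:ℝ) * N * (υ * N ^ 2) = υ * N ^ 3 := by ring
    linarith
  have t2 : |density Y ^ 2 * N * (∑ s, ind D s * u s)| ≤ υ * N ^ 3 := by
    rw [abs_mul, abs_of_nonneg (by positivity : (0:ℝ) ≤ density Y ^ 2 * N)]
    have h0 : density Y ^ 2 * N * |∑ s, ind D s * u s| ≤ 1 * N * (υ * N ^ 2) := by
      apply mul_le_mul _ hdu (abs_nonneg _) (by positivity)
      calc density Y ^ 2 * N ≤ 1 * N := mul_le_mul_of_nonneg_right hsq2 hN.le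
        _ = 1 * N := rfl
    have h1 : (1:ℝ) * N * (υ * N ^ 2) = υ * N ^ 3 := by ring
    linarith
  have habc : |density X ^ 2 * N * (∑ s, ind D s * v s)
      + density Y ^ 2 * N * (∑ s, ind D s * u s)
      + ∑ s, ind D s * (u s * v s)|
      ≤ 2 * (υ * N ^ 3) + υ ^ 2 * N ^ 3 := by
    have h1 := abs_add_le (density X ^ 2 * N * (∑ s, ind D s * v s)
      + density Y ^ 2 * N * (∑ s, ind D s * u s)) (∑ s, ind D s * (u s * v s))
    have h2 := abs_add_le (density X ^ 2 * N * (∑ s, ind D s * v s))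
      (density Y ^ 2 * N * (∑ s, ind D s * u s))
    linarith
  have t3 : |density D * (density X ^ 2 * N * (∑ s, ind D s * v s)
      + density Y ^ 2 * N * (∑ s, ind D s * u s)
      + ∑ s, ind D s * (u s * v s))|
      ≤ 2 * (υ * N ^ 3) + υ ^ 2 * N ^ 3 := by
    rw [abs_mul, abs_of_nonneg hδD0]
    have h5 : density D * |density X ^ 2 * N * (∑ s, ind D s * v s)
        + density Y ^ 2 * N * (∑ s, ind D s * u s)
        + ∑ s, ind D s * (u s * v s)|
        ≤ 1 * |density X ^ 2 * N * (∑ s, ind D s * v s)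
        + density Y ^ 2 * N * (∑ s, ind D s * u s)
        + ∑ s, ind D s * (u s * v s)| :=
      mul_le_mul_of_nonneg_right hδD1 (abs_nonneg _)
    linarith
  have hZ : |density D * (density X ^ 2 * N * (∑ s, ind D s * v s)
      + density Y ^ 2 * N * (∑ s, ind D s * u s)
      + ∑ s, ind D s * (u s * v s))
      + ∑ s, ind D s * Bf s| ≤ (3 * υ + υ ^ 2) * N ^ 3 := by
    have h1 := abs_add_le (density D * (density X ^ 2 * N * (∑ s, ind D s * v s)
      + density Y ^ 2 * N * (∑ s, ind D s * u s)
      + ∑ s, ind D s * (u s * v s))) (∑ s, ind D s * Bf s)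
    have h2 : (2 * (υ * N ^ 3) + υ ^ 2 * N ^ 3) + υ * N ^ 3 = (3 * υ + υ ^ 2) * N ^ 3 := by
      ring
    linarith
  rw [abs_div, abs_of_pos (by positivity : (0:ℝ) < N ^ 3)]
  rw [div_le_iff₀ (by positivity : (0:ℝ) < N ^ 3)]
  by_cases hυ1 : υ ≤ 1
  · have key : (3 * υ + υ ^ 2) * N ^ 3 ≤ 10 * υ * N ^ 3 := by
      have hprod : 0 ≤ (υ * (7 - υ)) * N ^ 3 :=
        mul_nonneg (mul_nonneg hυ0 (by linarith)) (pow_pos hN 3).le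
      nlinarith [hprod]
    linarith
  · push_neg at hυ1
    -- trivial bound: both quantities lie in [0,1] after normalization
    have hZeq : density D * (density X ^ 2 * N * (∑ s, ind D s * v s)
        + density Y ^ 2 * N * (∑ s, ind D s * u s)
        + ∑ s, ind D s * (u s * v s))
        + ∑ s, ind D s * Bf s
        = S - density X ^ 2 * density Y ^ 2 * density D ^ 2 * N ^ 3 := by
      rw [e4]; ring
    have hterm : ∀ x y s : H n, ind X x * ind X (x + s) * ind Y y * ind Y (y + s) *
        ind D (x + y) * ind D s ≤ 1 := by
      intro x y s
      simp only [ind]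
      split_ifs <;> norm_num
    have htermnn : ∀ x y s : H n, 0 ≤ ind X x * ind X (x + s) * ind Y y * ind Y (y + s) *
        ind D (x + y) * ind D s := by
      intro x y s
      exact mul_nonneg (mul_nonneg (mul_nonneg (mul_nonneg (mul_nonneg
        (ind_nonneg X x) (ind_nonneg X (x+s))) (ind_nonneg Y y)) (ind_nonneg Y (y+s)))
        (ind_nonneg D (x+y))) (ind_nonneg D s)
    have hS0 : 0 ≤ S := by
      rw [hS]
      exact Finset.sum_nonneg fun x _ => Finset.sum_nonneg fun y _ =>
        Finset.sum_nonneg fun s _ => htermnn x y s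
    have hS1 : S ≤ N ^ 3 := by
      rw [hS]
      calc (∑ x, ∑ y, ∑ s, ind X x * ind X (x + s) * ind Y y * ind Y (y + s) *
            ind D (x + y) * ind D s)
          ≤ ∑ _x : H n, ∑ _y : H n, ∑ _s : H n, (1:ℝ) := by
            refine Finset.sum_le_sum fun x _ => Finset.sum_le_sum fun y _ =>
              Finset.sum_le_sum fun s _ => hterm x y s
        _ = N ^ 3 := by
            simp only [Finset.sum_const, Finset.card_univ, nsmul_eq_mul, mul_one, ← hNdef]
            ring
    have hmain0 : 0 ≤ density X ^ 2 * density Y ^ 2 * density D ^ 2 := by positivity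
    have hmain1 : density X ^ 2 * density Y ^ 2 * density D ^ 2 ≤ 1 := by
      have h3 : density D ^ 2 ≤ 1 := pow_le_one₀ hδD0 hδD1
      have n1 : 0 ≤ density X ^ 2 := sq_nonneg _
      have n2 : 0 ≤ density Y ^ 2 := sq_nonneg _
      have n3 : 0 ≤ density D ^ 2 := sq_nonneg _
      have h12 : density X ^ 2 * density Y ^ 2 ≤ 1 := mul_le_one₀ hsq1 n2 hsq2
      exact mul_le_one₀ h12 n3 h3
    have habs2 : |density D * (density X ^ 2 * N * (∑ s, ind D s * v s)
        + density Y ^ 2 * N * (∑ s, ind D s * u s)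
        + ∑ s, ind D s * (u s * v s))
        + ∑ s, ind D s * Bf s| ≤ 2 * N ^ 3 := by
      rw [hZeq, abs_le]
      have hb1 : 0 ≤ density X ^ 2 * density Y ^ 2 * density D ^ 2 * N ^ 3 :=
        mul_nonneg hmain0 (pow_pos hN 3).le
      have hb2 : density X ^ 2 * density Y ^ 2 * density D ^ 2 * N ^ 3 ≤ N ^ 3 := by
        calc density X ^ 2 * density Y ^ 2 * density D ^ 2 * N ^ 3 ≤ 1 * N ^ 3 :=
            mul_le_mul_of_nonneg_right hmain1 (pow_pos hN 3).le
          _ = N ^ 3 := one_mul _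
      constructor <;> linarith
    have h10 : 2 * N ^ 3 ≤ 10 * υ * N ^ 3 := by
      have : (2:ℝ) ≤ 10 * υ := by linarith
      nlinarith [pow_pos hN 3]
    linarith
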